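/- The pseudo-true fundamentals minimizing the Kullback-Leibler divergence from the true censored history distribution to the subjective censored history distribution satisfy μ₁* = μ₁• and μ₂*(c) = μ₂• − γ·(μ₁• − E[X₁ | X₁ ≤ c]), where X₁ ~ N(μ₁•, σ²). Consequently μ₂*(c) < μ₂• for all c ∈ ℝ and c ↦ μ₂*(c) is strictly increasing. -/

import Mathlib

open MeasureTheory Set

/-- Gaussian density with mean `a` and variance `s2`. -/
noncomputable def gauss (a s2 x : ℝ) : ℝ :=
  (Real.sqrt (2 * Real.pi * s2))⁻¹ * Real.exp (-(x - a) ^ 2 / (2 * s2))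

/-- Mean of a `N(a, s2)` random variable truncated above at `c`, i.e. `E[X | X ≤ c]`. -/
noncomputable def truncMean (a s2 c : ℝ) : ℝ :=
  (∫ x in Iic c, x * gauss a s2 x) / (∫ x in Iic c, gauss a s2 x)

/-- KL divergence from the true censored history distribution (true fundamentals
`μ1b, μ2b`, independent draws) to the subjective censored history distribution with
fundamentals `μ1, μ2` and gambler's fallacy bias `γ`, censoring threshold `c`. -/
noncomputable def klObj (μ1b μ2b s2 γ c μ1 μ2 : ℝ) : ℝ :=
  (∫ x in Ioi c, gauss μ1b s2 x * Real.log (gauss μ1b s2 x / gauss μ1 s2 x)) +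
    ∫ x1 in Iic c, ∫ x2 : ℝ,
      gauss μ1b s2 x1 * gauss μ2b s2 x2 *
        Real.log (gauss μ1b s2 x1 * gauss μ2b s2 x2 /
          (gauss μ1 s2 x1 * gauss (μ2 - γ * (x1 - μ1)) s2 x2))

namespace PTFaux

variable {s2 : ℝ}

lemma sqrt_pos' (hs2 : 0 < s2) : 0 < Real.sqrt (2 * Real.pi * s2) :=
  Real.sqrt_pos.mpr (by positivity)

lemma gauss_pos (hs2 : 0 < s2) (a x : ℝ) : 0 < gauss a s2 x := by
  have h := sqrt_pos' hs2
  unfold gauss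
  positivity

lemma gauss_eq (a x : ℝ) :
    gauss a s2 x = (Real.sqrt (2 * Real.pi * s2))⁻¹ *
      Real.exp (-(2 * s2)⁻¹ * (x - a) ^ 2) := by
  unfold gauss
  rw [show -(x - a) ^ 2 / (2 * s2) = -(2 * s2)⁻¹ * (x - a) ^ 2 by ring]

lemma integrable_pow_mul_expg {b : ℝ} (hb : 0 < b) (n : ℕ) :
    Integrable fun x : ℝ => x ^ n * Real.exp (-b * x ^ 2) := by
  have h := integrable_rpow_mul_exp_neg_mul_sq hb
    (s := (n : ℝ)) (lt_of_lt_of_le (by norm_num : (-1:ℝ) < 0) (Nat.cast_nonneg n))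
  have : ∀ x : ℝ, x ^ (n : ℝ) * Real.exp (-b * x ^ 2)
      = x ^ n * Real.exp (-b * x ^ 2) := by
    intro x; rw [Real.rpow_natCast]
  exact h.congr (Filter.Eventually.of_forall this)

lemma integrable_pow_mul_gauss (hs2 : 0 < s2) (a : ℝ) (n : ℕ) :
    Integrable fun x => (x - a) ^ n * gauss a s2 x := by
  have hb : 0 < (2 * s2)⁻¹ := by positivity
  have h := ((integrable_pow_mul_expg hb n).mul_const
    (Real.sqrt (2 * Real.pi * s2))⁻¹).comp_sub_right a
  refine h.congr (Filter.Eventually.of_forall fun x => ?_)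
  simp only [gauss_eq]
  ring

lemma integrable_gauss (hs2 : 0 < s2) (a : ℝ) : Integrable (gauss a s2) := by
  have h := integrable_pow_mul_gauss hs2 a 0
  simpa using h

lemma integrable_id_mul_gauss (hs2 : 0 < s2) (a : ℝ) :
    Integrable fun x => x * gauss a s2 x := by
  have h := (integrable_pow_mul_gauss hs2 a 1).add
    ((integrable_gauss hs2 a).const_mul a)
  refine h.congr (Filter.Eventually.of_forall fun x => ?_)
  simp only [Pi.add_apply]
  ring

lemma integrable_sq_mul_gauss (hs2 : 0 < s2) (a : ℝ) :
    Integrable fun x => x ^ 2 * gauss a s2 x := by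
  have h := ((integrable_pow_mul_gauss hs2 a 2).add
    ((integrable_pow_mul_gauss hs2 a 1).const_mul (2 * a))).add
    ((integrable_gauss hs2 a).const_mul (a ^ 2))
  refine h.congr (Filter.Eventually.of_forall fun x => ?_)
  simp only [Pi.add_apply]
  ring

lemma integral_gauss (hs2 : 0 < s2) (a : ℝ) : ∫ x, gauss a s2 x = 1 := by
  have hv : s2.toNNReal ≠ 0 := by
    simp only [ne_eq, Real.toNNReal_eq_zero, not_le]
    exact hs2
  have h := ProbabilityTheory.integral_gaussianPDFReal_eq_one a hv
  rw [← h]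
  congr 1
  ext x
  unfold gauss ProbabilityTheory.gaussianPDFReal
  rw [Real.coe_toNNReal _ hs2.le]

lemma integral_id_mul_gauss (hs2 : 0 < s2) (a : ℝ) :
    ∫ x, x * gauss a s2 x = a := by
  have hb : 0 < (2 * s2)⁻¹ := by positivity
  set K := (Real.sqrt (2 * Real.pi * s2))⁻¹ with hK
  have hodd : ∫ x, (x - a) * gauss a s2 x = 0 := by
    have h1 : ∫ x, (x - a) * gauss a s2 x
        = ∫ y, y * (K * Real.exp (-(2 * s2)⁻¹ * y ^ 2)) := by
      rw [← integral_sub_right_eq_self (fun y => y * (K * Real.exp (-(2 * s2)⁻¹ * y ^ 2))) a]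
      congr 1
      ext x
      rw [gauss_eq]
    have h2 : ∫ y, (-y) * (K * Real.exp (-(2 * s2)⁻¹ * (-y) ^ 2))
        = ∫ y, y * (K * Real.exp (-(2 * s2)⁻¹ * y ^ 2)) :=
      integral_neg_eq_self (fun y => y * (K * Real.exp (-(2 * s2)⁻¹ * y ^ 2))) volume
    have h3 : ∫ y, (-y) * (K * Real.exp (-(2 * s2)⁻¹ * (-y) ^ 2))
        = -∫ y, y * (K * Real.exp (-(2 * s2)⁻¹ * y ^ 2)) := by
      rw [← MeasureTheory.integral_neg]
      congr 1
      ext y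
      rw [neg_sq]
      ring
    rw [h1]
    linarith [h2.symm.trans h3]
  have hsum : ∫ x, ((x - a) * gauss a s2 x + a * gauss a s2 x) =
      (∫ x, (x - a) * gauss a s2 x) + ∫ x, a * gauss a s2 x :=
    integral_add (by simpa using integrable_pow_mul_gauss hs2 a 1)
      ((integrable_gauss hs2 a).const_mul a)
  have hcongr : ∫ x, x * gauss a s2 x
      = ∫ x, ((x - a) * gauss a s2 x + a * gauss a s2 x) := by
    congr 1; ext x; ring
  rw [hcongr, hsum, hodd, integral_const_mul, integral_gauss hs2, zero_add, mul_one]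

lemma log_gauss_div (hs2 : 0 < s2) (p q x : ℝ) :
    Real.log (gauss p s2 x / gauss q s2 x) = ((x - q) ^ 2 - (x - p) ^ 2) / (2 * s2) := by
  have hsq := sqrt_pos' hs2
  rw [Real.log_div (gauss_pos hs2 p x).ne' (gauss_pos hs2 q x).ne']
  unfold gauss
  rw [Real.log_mul (by positivity) (Real.exp_ne_zero _),
    Real.log_mul (by positivity) (Real.exp_ne_zero _),
    Real.log_exp, Real.log_exp]
  ring

lemma integrable_gauss_mul_log (hs2 : 0 < s2) (p q : ℝ) :
    Integrable fun x => gauss p s2 x * Real.log (gauss p s2 x / gauss q s2 x) := by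
  have h := (((integrable_id_mul_gauss hs2 p).const_mul ((p - q) / s2)).add
    ((integrable_gauss hs2 p).const_mul ((q ^ 2 - p ^ 2) / (2 * s2))))
  refine h.congr (Filter.Eventually.of_forall fun x => ?_)
  simp only [Pi.add_apply, log_gauss_div hs2]
  field_simp
  ring

lemma KL_gauss (hs2 : 0 < s2) (p q : ℝ) :
    ∫ x, gauss p s2 x * Real.log (gauss p s2 x / gauss q s2 x)
      = (p - q) ^ 2 / (2 * s2) := by
  have hcongr : (fun x => gauss p s2 x * Real.log (gauss p s2 x / gauss q s2 x))
      = fun x => ((p - q) / s2) * (x * gauss p s2 x)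
        + ((q ^ 2 - p ^ 2) / (2 * s2)) * gauss p s2 x := by
    ext x
    rw [log_gauss_div hs2]
    field_simp
    ring
  rw [hcongr, integral_add (((integrable_id_mul_gauss hs2 p).const_mul _))
      (((integrable_gauss hs2 p).const_mul _)),
    integral_const_mul, integral_const_mul, integral_id_mul_gauss hs2,
    integral_gauss hs2]
  field_simp
  ring

lemma inner_integral (hs2 : 0 < s2) {C D : ℝ} (μ2b m : ℝ) (hC : 0 < C) (hD : 0 < D) :
    ∫ x2, C * gauss μ2b s2 x2 * Real.log (C * gauss μ2b s2 x2 / (D * gauss m s2 x2))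
      = C * Real.log (C / D) + C * ((μ2b - m) ^ 2 / (2 * s2)) := by
  have hrw : ∀ x2, C * gauss μ2b s2 x2 *
        Real.log (C * gauss μ2b s2 x2 / (D * gauss m s2 x2))
      = (C * Real.log (C / D)) * gauss μ2b s2 x2
        + C * (gauss μ2b s2 x2 * Real.log (gauss μ2b s2 x2 / gauss m s2 x2)) := by
    intro x2
    have h2b := gauss_pos hs2 μ2b x2
    have hm := gauss_pos hs2 m x2
    rw [show C * gauss μ2b s2 x2 / (D * gauss m s2 x2)
        = (C / D) * (gauss μ2b s2 x2 / gauss m s2 x2) from (div_mul_div_comm C D _ _).symm,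
      Real.log_mul (by positivity) (by positivity)]
    ring
  rw [integral_congr_ae (Filter.Eventually.of_forall hrw),
    integral_add ((integrable_gauss hs2 μ2b).const_mul _)
      ((integrable_gauss_mul_log hs2 μ2b m).const_mul C),
    integral_const_mul, integral_const_mul, integral_gauss hs2, KL_gauss hs2]
  ring

lemma integrable_quad (hs2 : 0 < s2) (a A g' : ℝ) :
    Integrable fun x => gauss a s2 x * ((A + g' * x) ^ 2 / (2 * s2)) := by
  have h := (((integrable_gauss hs2 a).const_mul (A ^ 2 / (2 * s2))).add
      ((integrable_id_mul_gauss hs2 a).const_mul (2 * A * g' / (2 * s2)))).add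
    ((integrable_sq_mul_gauss hs2 a).const_mul (g' ^ 2 / (2 * s2)))
  refine h.congr (Filter.Eventually.of_forall fun x => ?_)
  simp only [Pi.add_apply]
  field_simp
  ring

lemma klObj_eq {μ1b μ2b γ c μ1 μ2 : ℝ} (hs2 : 0 < s2) :
    klObj μ1b μ2b s2 γ c μ1 μ2 =
      (μ1b - μ1) ^ 2 / (2 * s2) +
      ((μ2b - μ2 - γ * μ1) ^ 2 * (∫ x in Iic c, gauss μ1b s2 x)
        + 2 * (μ2b - μ2 - γ * μ1) * γ * (∫ x in Iic c, x * gauss μ1b s2 x)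
        + γ ^ 2 * (∫ x in Iic c, x ^ 2 * gauss μ1b s2 x)) / (2 * s2) := by
  have hInner : ∀ x1 : ℝ,
      (∫ x2 : ℝ, gauss μ1b s2 x1 * gauss μ2b s2 x2 *
        Real.log (gauss μ1b s2 x1 * gauss μ2b s2 x2 /
          (gauss μ1 s2 x1 * gauss (μ2 - γ * (x1 - μ1)) s2 x2)))
      = gauss μ1b s2 x1 * Real.log (gauss μ1b s2 x1 / gauss μ1 s2 x1)
        + gauss μ1b s2 x1 *
          (((μ2b - μ2 - γ * μ1) + γ * x1) ^ 2 / (2 * s2)) := by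
    intro x1
    rw [inner_integral hs2 μ2b (μ2 - γ * (x1 - μ1)) (gauss_pos hs2 μ1b x1)
      (gauss_pos hs2 μ1 x1),
      show μ2b - (μ2 - γ * (x1 - μ1)) = (μ2b - μ2 - γ * μ1) + γ * x1 by ring]
  unfold klObj
  rw [setIntegral_congr_fun measurableSet_Iic (fun x1 _ => hInner x1)]
  rw [integral_add ((integrable_gauss_mul_log hs2 μ1b μ1).integrableOn)
    ((integrable_quad hs2 μ1b (μ2b - μ2 - γ * μ1) γ).integrableOn)]
  have hsplit : (∫ x in Ioi c, gauss μ1b s2 x *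
        Real.log (gauss μ1b s2 x / gauss μ1 s2 x))
      + (∫ x in Iic c, gauss μ1b s2 x *
        Real.log (gauss μ1b s2 x / gauss μ1 s2 x))
      = (μ1b - μ1) ^ 2 / (2 * s2) := by
    rw [add_comm, intervalIntegral.integral_Iic_add_Ioi
      ((integrable_gauss_mul_log hs2 μ1b μ1).integrableOn)
      ((integrable_gauss_mul_log hs2 μ1b μ1).integrableOn),
      KL_gauss hs2]
  have hquad : (∫ x in Iic c,
        gauss μ1b s2 x * (((μ2b - μ2 - γ * μ1) + γ * x) ^ 2 / (2 * s2)))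
      = ((μ2b - μ2 - γ * μ1) ^ 2 * (∫ x in Iic c, gauss μ1b s2 x)
        + 2 * (μ2b - μ2 - γ * μ1) * γ * (∫ x in Iic c, x * gauss μ1b s2 x)
        + γ ^ 2 * (∫ x in Iic c, x ^ 2 * gauss μ1b s2 x)) / (2 * s2) := by
    have hrw : ∀ x : ℝ, gauss μ1b s2 x * (((μ2b - μ2 - γ * μ1) + γ * x) ^ 2 / (2 * s2))
        = ((μ2b - μ2 - γ * μ1) ^ 2 / (2 * s2)) * gauss μ1b s2 x
          + (2 * (μ2b - μ2 - γ * μ1) * γ / (2 * s2)) * (x * gauss μ1b s2 x)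
          + (γ ^ 2 / (2 * s2)) * (x ^ 2 * gauss μ1b s2 x) := by
      intro x; field_simp; ring
    have hIa : Integrable (fun x => (μ2b - μ2 - γ * μ1) ^ 2 / (2 * s2) * gauss μ1b s2 x) :=
      (integrable_gauss hs2 μ1b).const_mul _
    have hIb : Integrable
        (fun x => 2 * (μ2b - μ2 - γ * μ1) * γ / (2 * s2) * (x * gauss μ1b s2 x)) :=
      (integrable_id_mul_gauss hs2 μ1b).const_mul _
    have hIc : Integrable (fun x => γ ^ 2 / (2 * s2) * (x ^ 2 * gauss μ1b s2 x)) :=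
      (integrable_sq_mul_gauss hs2 μ1b).const_mul _
    have hIab : Integrable (fun x => (μ2b - μ2 - γ * μ1) ^ 2 / (2 * s2) * gauss μ1b s2 x
        + 2 * (μ2b - μ2 - γ * μ1) * γ / (2 * s2) * (x * gauss μ1b s2 x)) := by
      exact hIa.add hIb
    rw [setIntegral_congr_fun measurableSet_Iic (fun x _ => hrw x),
      integral_add hIab.integrableOn hIc.integrableOn,
      integral_add hIa.integrableOn hIb.integrableOn,
      integral_const_mul, integral_const_mul, integral_const_mul]
    field_simp
  rw [← add_assoc, hsplit, hquad]

lemma setP_pos (hs2 : 0 < s2) (a c : ℝ) : 0 < ∫ x in Iic c, gauss a s2 x := by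
  rw [setIntegral_pos_iff_support_of_nonneg_ae
    (Filter.Eventually.of_forall fun x => (gauss_pos hs2 a x).le)
    ((integrable_gauss hs2 a).integrableOn)]
  have hsupp : Function.support (gauss a s2) = univ := by
    ext x; simp [Function.mem_support, (gauss_pos hs2 a x).ne']
  rw [hsupp, univ_inter, Real.volume_Iic]
  exact ENNReal.zero_lt_top

lemma tendsto_gauss_atBot (hs2 : 0 < s2) (a : ℝ) :
    Filter.Tendsto (fun x => -s2 * gauss a s2 x) Filter.atBot (nhds 0) := by
  set K := (Real.sqrt (2 * Real.pi * s2))⁻¹ with hK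
  have h1 : Filter.Tendsto (fun x : ℝ => x - a) Filter.atBot Filter.atBot :=
    Filter.tendsto_atBot_add_const_right _ _ Filter.tendsto_id
  have h1' : Filter.Tendsto (fun x : ℝ => -(x - a)) Filter.atBot Filter.atTop :=
    Filter.tendsto_neg_atBot_atTop.comp h1
  have h2 : Filter.Tendsto (fun x : ℝ => (x - a) ^ 2) Filter.atBot Filter.atTop := by
    have := (Filter.tendsto_pow_atTop (two_ne_zero)).comp h1'
    refine this.congr fun x => ?_
    simp only [Function.comp_apply]
    ring
  have h3 : Filter.Tendsto (fun x : ℝ => -(x - a) ^ 2) Filter.atBot Filter.atBot :=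
    Filter.tendsto_neg_atTop_atBot.comp h2
  have h4 : Filter.Tendsto (fun x : ℝ => -(x - a) ^ 2 / (2 * s2)) Filter.atBot
      Filter.atBot := h3.atBot_div_const (by positivity)
  have h5 : Filter.Tendsto (fun x : ℝ => Real.exp (-(x - a) ^ 2 / (2 * s2)))
      Filter.atBot (nhds 0) := Real.tendsto_exp_atBot.comp h4
  have h6 := h5.const_mul (-s2 * K)
  rw [mul_zero] at h6
  refine h6.congr fun x => ?_
  unfold gauss
  rw [← hK]
  ring

lemma hasDerivAt_neg_gauss (hs2 : 0 < s2) (a x : ℝ) :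
    HasDerivAt (fun y => -s2 * gauss a s2 y) ((x - a) * gauss a s2 x) x := by
  set K := (Real.sqrt (2 * Real.pi * s2))⁻¹ with hK
  have hu : HasDerivAt (fun y : ℝ => -(y - a) ^ 2 / (2 * s2)) (-(x - a) / s2) x := by
    have h := (((hasDerivAt_id x).sub_const a).pow 2).neg.div_const (2 * s2)
    refine h.congr_deriv ?_
    simp only [id]
    field_simp
    ring
  have hexp := hu.exp
  have h := hexp.const_mul (-s2 * K)
  have heq : -s2 * K * (Real.exp (-(x - a) ^ 2 / (2 * s2)) * (-(x - a) / s2))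
      = (x - a) * gauss a s2 x := by
    unfold gauss
    rw [← hK]
    field_simp
  rw [heq] at h
  have hfun : (fun y : ℝ => -s2 * K * Real.exp (-(y - a) ^ 2 / (2 * s2)))
      = fun y => -s2 * gauss a s2 y := by
    ext y
    unfold gauss
    rw [← hK]
    ring
  rwa [hfun] at h

lemma integrable_sub_mul_gauss (hs2 : 0 < s2) (a : ℝ) :
    Integrable fun x => (x - a) * gauss a s2 x := by
  simpa using integrable_pow_mul_gauss hs2 a 1

lemma integral_Iic_sub_mul_gauss (hs2 : 0 < s2) (a c : ℝ) :
    ∫ x in Iic c, (x - a) * gauss a s2 x = -s2 * gauss a s2 c := by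
  have h := integral_Iic_of_hasDerivAt_of_tendsto' (a := c)
    (f := fun y => -s2 * gauss a s2 y) (f' := fun x => (x - a) * gauss a s2 x)
    (fun x _ => hasDerivAt_neg_gauss hs2 a x)
    ((integrable_sub_mul_gauss hs2 a).integrableOn)
    (tendsto_gauss_atBot hs2 a)
  rw [h, sub_zero]


lemma integral_Iic_sub_aux (hs2 : 0 < s2) (a c b : ℝ) :
    ∫ x in Iic c, (x - b) * gauss a s2 x
      = (∫ x in Iic c, x * gauss a s2 x) - b * ∫ x in Iic c, gauss a s2 x := by
  rw [← integral_const_mul,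
    ← integral_sub ((integrable_id_mul_gauss hs2 a).integrableOn)
      (((integrable_gauss hs2 a).const_mul b).integrableOn)]
  congr 1
  ext x
  ring

lemma truncMean_lt (hs2 : 0 < s2) (a c : ℝ) : truncMean a s2 c < a := by
  have hP := setP_pos hs2 a c
  rw [truncMean, div_lt_iff₀ hP]
  have h1 := integral_Iic_sub_aux hs2 a c a
  have h2 := integral_Iic_sub_mul_gauss hs2 a c
  have h3 := gauss_pos hs2 a c
  nlinarith [h1, h2, h3]

lemma setIntegral_Ioc_gauss_pos (hs2 : 0 < s2) (a : ℝ) {c1 c2 : ℝ} (h : c1 < c2) :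
    0 < ∫ x in Ioc c1 c2, gauss a s2 x := by
  rw [setIntegral_pos_iff_support_of_nonneg_ae
    (Filter.Eventually.of_forall fun x => (gauss_pos hs2 a x).le)
    ((integrable_gauss hs2 a).integrableOn)]
  have hsub : Ioc c1 c2 ⊆ Function.support (gauss a s2) ∩ Ioc c1 c2 := fun x hx =>
    ⟨(gauss_pos hs2 a x).ne', hx⟩
  calc (0 : ENNReal) < volume (Ioc c1 c2) := by
        rw [Real.volume_Ioc]; simp [h]
    _ ≤ _ := measure_mono hsub

lemma setIntegral_Ioc_sub_gauss_pos (hs2 : 0 < s2) (a : ℝ) {c1 c2 : ℝ} (h : c1 < c2) :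
    0 < ∫ x in Ioc c1 c2, (x - c1) * gauss a s2 x := by
  have hInt : Integrable fun x => (x - c1) * gauss a s2 x := by
    have := (integrable_id_mul_gauss hs2 a).add
      ((integrable_gauss hs2 a).const_mul (-c1))
    refine this.congr (Filter.Eventually.of_forall fun x => ?_)
    simp only [Pi.add_apply]
    ring
  rw [setIntegral_pos_iff_support_of_nonneg_ae ?_ hInt.integrableOn]
  · have hsub : Ioc c1 c2 ⊆
        Function.support (fun x => (x - c1) * gauss a s2 x) ∩ Ioc c1 c2 := by
      intro x hx
      refine ⟨?_, hx⟩
      have h1 : 0 < x - c1 := sub_pos.mpr hx.1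
      have h2 := gauss_pos hs2 a x
      exact (mul_pos h1 h2).ne'
    calc (0 : ENNReal) < volume (Ioc c1 c2) := by
          rw [Real.volume_Ioc]; simp [h]
      _ ≤ _ := measure_mono hsub
  · filter_upwards [ae_restrict_mem measurableSet_Ioc] with x hx
    have h1 : 0 ≤ x - c1 := sub_nonneg.mpr hx.1.le
    exact mul_nonneg h1 (gauss_pos hs2 a x).le

lemma setIntegral_Iic_split (hs2 : 0 < s2) {f : ℝ → ℝ} (hf : Integrable f)
    {c1 c2 : ℝ} (h : c1 ≤ c2) :
    ∫ x in Iic c2, f x = (∫ x in Iic c1, f x) + ∫ x in Ioc c1 c2, f x := by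
  rw [← Iic_union_Ioc_eq_Iic h,
    setIntegral_union (Iic_disjoint_Ioc le_rfl) measurableSet_Ioc
      hf.integrableOn hf.integrableOn]

lemma setIntegral_Iic_csub_gauss_pos (hs2 : 0 < s2) (a c : ℝ) :
    0 < ∫ x in Iic c, (c - x) * gauss a s2 x := by
  have hInt : Integrable fun x => (c - x) * gauss a s2 x := by
    have := ((integrable_gauss hs2 a).const_mul c).add
      ((integrable_id_mul_gauss hs2 a).const_mul (-1))
    refine this.congr (Filter.Eventually.of_forall fun x => ?_)
    simp only [Pi.add_apply]
    ring
  rw [setIntegral_pos_iff_support_of_nonneg_ae ?_ hInt.integrableOn]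
  · have hsub : Iio c ⊆
        Function.support (fun x => (c - x) * gauss a s2 x) ∩ Iic c := by
      intro x hx
      refine ⟨?_, mem_Iic.mpr (le_of_lt hx)⟩
      have h1 : 0 < c - x := sub_pos.mpr hx
      exact (mul_pos h1 (gauss_pos hs2 a x)).ne'
    calc (0 : ENNReal) < volume (Iio c) := by rw [Real.volume_Iio]; simp
      _ ≤ _ := measure_mono hsub
  · filter_upwards [ae_restrict_mem measurableSet_Iic] with x hx
    exact mul_nonneg (sub_nonneg.mpr hx) (gauss_pos hs2 a x).le

lemma truncMean_strictMono (hs2 : 0 < s2) (a : ℝ) {c1 c2 : ℝ} (h : c1 < c2) :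
    truncMean a s2 c1 < truncMean a s2 c2 := by
  have hP1 := setP_pos hs2 a c1
  have hP2 := setP_pos hs2 a c2
  rw [truncMean, truncMean, div_lt_div_iff₀ hP1 hP2]
  have hPsplit := setIntegral_Iic_split hs2 (integrable_gauss hs2 a) h.le (c1 := c1) (c2 := c2)
  have hNsplit := setIntegral_Iic_split hs2 (integrable_id_mul_gauss hs2 a) h.le (c1 := c1) (c2 := c2)
  have hDP : 0 < ∫ x in Ioc c1 c2, gauss a s2 x := setIntegral_Ioc_gauss_pos hs2 a h
  -- N1 < c1 * P1
  have hN1 : (∫ x in Iic c1, x * gauss a s2 x) < c1 * ∫ x in Iic c1, gauss a s2 x := by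
    have hpos := setIntegral_Iic_csub_gauss_pos hs2 a c1
    have haux : ∫ x in Iic c1, (c1 - x) * gauss a s2 x
        = c1 * (∫ x in Iic c1, gauss a s2 x)
          - ∫ x in Iic c1, x * gauss a s2 x := by
      rw [← integral_const_mul,
        ← integral_sub (((integrable_gauss hs2 a).const_mul c1).integrableOn)
          ((integrable_id_mul_gauss hs2 a).integrableOn)]
      congr 1
      ext x
      ring
    linarith [haux ▸ hpos]
  have hDN : c1 * (∫ x in Ioc c1 c2, gauss a s2 x)
      < ∫ x in Ioc c1 c2, x * gauss a s2 x := by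
    have hpos := setIntegral_Ioc_sub_gauss_pos hs2 a h
    have haux : ∫ x in Ioc c1 c2, (x - c1) * gauss a s2 x
        = (∫ x in Ioc c1 c2, x * gauss a s2 x)
          - c1 * ∫ x in Ioc c1 c2, gauss a s2 x := by
      rw [← integral_const_mul,
        ← integral_sub ((integrable_id_mul_gauss hs2 a).integrableOn)
          (((integrable_gauss hs2 a).const_mul c1).integrableOn)]
      congr 1
      ext x
      ring
    linarith [haux ▸ hpos]
  have k1 : 0 < (c1 * (∫ x in Iic c1, gauss a s2 x) - ∫ x in Iic c1, x * gauss a s2 x)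
      * ∫ x in Ioc c1 c2, gauss a s2 x :=
    mul_pos (sub_pos.mpr hN1) hDP
  have k2 : 0 < ((∫ x in Ioc c1 c2, x * gauss a s2 x)
      - c1 * ∫ x in Ioc c1 c2, gauss a s2 x) * ∫ x in Iic c1, gauss a s2 x :=
    mul_pos (sub_pos.mpr hDN) hP1
  rw [hPsplit, hNsplit]
  nlinarith [k1, k2]

end PTFaux

theorem pseudo_true_fundamentals (μ1b μ2b s2 γ : ℝ) (hs2 : 0 < s2) (hγ : 0 < γ) :
    (∀ c μ1 μ2 : ℝ,
        (∀ μ1' μ2' : ℝ, klObj μ1b μ2b s2 γ c μ1 μ2 ≤ klObj μ1b μ2b s2 γ c μ1' μ2') →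
        μ1 = μ1b ∧ μ2 = μ2b - γ * (μ1b - truncMean μ1b s2 c)) ∧
    (∀ c : ℝ, μ2b - γ * (μ1b - truncMean μ1b s2 c) < μ2b) ∧
    StrictMono (fun c => μ2b - γ * (μ1b - truncMean μ1b s2 c)) := by
  refine ⟨?_, ?_, ?_⟩
  · intro c μ1 μ2 hmin
    have hP : 0 < ∫ x in Iic c, gauss μ1b s2 x := PTFaux.setP_pos hs2 μ1b c
    have h := hmin μ1b (μ2b - γ * (μ1b - truncMean μ1b s2 c))
    rw [PTFaux.klObj_eq hs2, PTFaux.klObj_eq hs2] at h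
    have hM : (∫ x in Iic c, x * gauss μ1b s2 x)
        = truncMean μ1b s2 c * ∫ x in Iic c, gauss μ1b s2 x := by
      rw [truncMean, div_mul_cancel₀ _ hP.ne']
    rw [hM] at h
    rw [← add_div, ← add_div, div_le_div_iff_of_pos_right (by linarith : (0:ℝ) < 2 * s2)] at h
    have h1 : (μ1b - μ1) ^ 2 ≤ 0 := by
      nlinarith [h, hP, mul_nonneg hP.le
        (sq_nonneg (μ2b - μ2 - γ * μ1 + γ * truncMean μ1b s2 c))]
    have hμ1 : μ1 = μ1b := by
      have h2 : (μ1b - μ1) ^ 2 = 0 := le_antisymm h1 (sq_nonneg _)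
      have h3 : μ1b - μ1 = 0 :=
        (pow_eq_zero_iff (by norm_num : (2:ℕ) ≠ 0)).mp h2
      linarith
    refine ⟨hμ1, ?_⟩
    have h4 : (∫ x in Iic c, gauss μ1b s2 x) *
        (μ2b - μ2 - γ * μ1 + γ * truncMean μ1b s2 c) ^ 2 ≤ 0 := by
      nlinarith [h, sq_nonneg (μ1b - μ1)]
    have h5 : (μ2b - μ2 - γ * μ1 + γ * truncMean μ1b s2 c) ^ 2 ≤ 0 := by
      nlinarith [h4, hP, sq_nonneg (μ2b - μ2 - γ * μ1 + γ * truncMean μ1b s2 c)]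
    have h6 : μ2b - μ2 - γ * μ1 + γ * truncMean μ1b s2 c = 0 :=
      (pow_eq_zero_iff (by norm_num : (2:ℕ) ≠ 0)).mp (le_antisymm h5 (sq_nonneg _))
    rw [hμ1] at h6
    linarith [h6]
  · intro c
    have := PTFaux.truncMean_lt hs2 μ1b c
    nlinarith [this, hγ]
  · intro c1 c2 h
    have := PTFaux.truncMean_strictMono hs2 μ1b h
    simp only
    nlinarith [this, hγ]
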